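/- arXiv:math/9502201 — 2 statements merged into one kernel-verified Lean document; each statement's English description precedes it below -/
import Mathlib

section
/- For integers ν₁, ν₂, ν₃ ≥ 2 with 1/ν₁ + 1/ν₂ + 1/ν₃ < 1 (hyperbolic signature), the quantity l² = q₁² + q₂² + q₃² + 2q₁q₂q₃ - 1 is strictly positive, where qⱼ = cos(π/νⱼ). -/
open Real

theorem triangle_group_hyperbolic_l_sq_pos
    (ν₁ ν₂ ν₃ : ℕ) (h₁ : 2 ≤ ν₁) (h₂ : 2 ≤ ν₂) (h₃ : 2 ≤ ν₃)
    (hhyp : (1 : ℝ) / ν₁ + 1 / ν₂ + 1 / ν₃ < 1) :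
    0 < Real.cos (π / ν₁) ^ 2 + Real.cos (π / ν₂) ^ 2 + Real.cos (π / ν₃) ^ 2 +
        2 * Real.cos (π / ν₁) * Real.cos (π / ν₂) * Real.cos (π / ν₃) - 1 := by
  have hπ := Real.pi_pos
  have hr₁ : (2:ℝ) ≤ ν₁ := by exact_mod_cast h₁
  have hr₂ : (2:ℝ) ≤ ν₂ := by exact_mod_cast h₂
  have hr₃ : (2:ℝ) ≤ ν₃ := by exact_mod_cast h₃
  set a := π / ν₁ with ha
  set b := π / ν₂ with hb
  set c := π / ν₃ with hc
  have hpos₁ : (0:ℝ) < ν₁ := by linarith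
  have hpos₂ : (0:ℝ) < ν₂ := by linarith
  have hpos₃ : (0:ℝ) < ν₃ := by linarith
  have ha0 : 0 < a := div_pos hπ hpos₁
  have hb0 : 0 < b := div_pos hπ hpos₂
  have hc0 : 0 < c := div_pos hπ hpos₃
  have ha2 : a ≤ π / 2 := div_le_div_of_nonneg_left hπ.le (by norm_num) hr₁
  have hb2 : b ≤ π / 2 := div_le_div_of_nonneg_left hπ.le (by norm_num) hr₂
  have hc2 : c ≤ π / 2 := div_le_div_of_nonneg_left hπ.le (by norm_num) hr₃
  -- sum of angles is less than π
  have hsum : a + b + c < π := by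
    have : a + b + c = π * (1 / ν₁ + 1 / ν₂ + 1 / ν₃) := by
      rw [ha, hb, hc]; ring
    rw [this]
    nlinarith
  -- factorization
  have key : Real.cos a ^ 2 + Real.cos b ^ 2 + Real.cos c ^ 2 +
      2 * Real.cos a * Real.cos b * Real.cos c - 1 =
      (Real.cos c + Real.cos (a + b)) * (Real.cos c + Real.cos (a - b)) := by
    rw [Real.cos_add, Real.cos_sub]
    have e1 := Real.sin_sq_add_cos_sq a
    have e2 := Real.sin_sq_add_cos_sq b
    nlinarith [e1, e2, sq_nonneg (Real.sin a * Real.sin b)]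
  rw [key]
  -- first factor positive
  have hf1 : 0 < Real.cos c + Real.cos (a + b) := by
    have hlt : a + b < π - c := by linarith
    have hcos : Real.cos (π - c) < Real.cos (a + b) :=
      Real.cos_lt_cos_of_nonneg_of_le_pi (by linarith) (by linarith) hlt
    rw [Real.cos_pi_sub] at hcos
    linarith
  -- second factor positive
  have hf2 : 0 < Real.cos c + Real.cos (a - b) := by
    have hcosc : 0 ≤ Real.cos c :=
      Real.cos_nonneg_of_mem_Icc ⟨by linarith, hc2⟩
    have hcosab : 0 < Real.cos (a - b) :=
      Real.cos_pos_of_mem_Ioo ⟨by linarith, by linarith⟩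
    linarith
  exact mul_pos hf1 hf2
end

section
/- Let qⱼ = cos(π/νⱼ), pⱼ = sin(π/νⱼ) for integers ν₁,ν₂,ν₃ ≥ 2 with hyperbolic signature, let l = √(q₁²+q₂²+q₃²+2q₁q₂q₃-1) > 0, k = (q₂+q₁q₃+q₁l)/(p₁l), h = kp₁p₂/(q₁q₂+q₃+l). Define A = [[-q₁, -kp₁],[k⁻¹p₁, -q₁]] and B = [[-q₂, -hp₂],[h⁻¹p₂, -q₂]]. Then det(A) = det(B) = 1 and trace(A·B) = -2q₃. -/
open Real Matrix

theorem canonical_generators_finite_case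
    (ν₁ ν₂ ν₃ : ℕ) (h₁ : 2 ≤ ν₁) (h₂ : 2 ≤ ν₂) (h₃ : 2 ≤ ν₃)
    (hhyp : (1 : ℝ) / ν₁ + 1 / ν₂ + 1 / ν₃ < 1)
    (q₁ q₂ q₃ p₁ p₂ l k h : ℝ)
    (hq₁ : q₁ = Real.cos (π / ν₁)) (hq₂ : q₂ = Real.cos (π / ν₂))
    (hq₃ : q₃ = Real.cos (π / ν₃))
    (hp₁ : p₁ = Real.sin (π / ν₁)) (hp₂ : p₂ = Real.sin (π / ν₂))
    (hl : l = Real.sqrt (q₁ ^ 2 + q₂ ^ 2 + q₃ ^ 2 + 2 * q₁ * q₂ * q₃ - 1))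
    (hlpos : 0 < l)
    (hk : k = (q₂ + q₁ * q₃ + q₁ * l) / (p₁ * l))
    (hh : h = k * p₁ * p₂ / (q₁ * q₂ + q₃ + l))
    (hden₁ : p₁ * l ≠ 0) (hden₂ : q₁ * q₂ + q₃ + l ≠ 0) :
    (!![-q₁, -k * p₁; k⁻¹ * p₁, -q₁] : Matrix (Fin 2) (Fin 2) ℝ).det = 1 ∧
    (!![-q₂, -h * p₂; h⁻¹ * p₂, -q₂] : Matrix (Fin 2) (Fin 2) ℝ).det = 1 ∧
    ((!![-q₁, -k * p₁; k⁻¹ * p₁, -q₁] : Matrix (Fin 2) (Fin 2) ℝ) *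
        !![-q₂, -h * p₂; h⁻¹ * p₂, -q₂]).trace = -2 * q₃ := by
  have hπ := Real.pi_pos
  -- basic angle bounds
  have hb : ∀ ν : ℕ, 2 ≤ ν → 0 < π / ν ∧ π / ν ≤ π / 2 := by
    intro ν hν
    have hν0 : (0:ℝ) < ν := by positivity
    constructor
    · positivity
    · apply div_le_div_of_nonneg_left (le_of_lt hπ) (by norm_num)
      exact_mod_cast hν
  obtain ⟨ha₁, hb₁⟩ := hb ν₁ h₁
  obtain ⟨ha₂, hb₂⟩ := hb ν₂ h₂
  obtain ⟨ha₃, hb₃⟩ := hb ν₃ h₃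
  have hπ2 : π / 2 < π := by linarith
  have hp₁pos : 0 < p₁ := hp₁ ▸ Real.sin_pos_of_pos_of_lt_pi ha₁ (lt_of_le_of_lt hb₁ hπ2)
  have hp₂pos : 0 < p₂ := hp₂ ▸ Real.sin_pos_of_pos_of_lt_pi ha₂ (lt_of_le_of_lt hb₂ hπ2)
  have hq₁nn : 0 ≤ q₁ := hq₁ ▸ Real.cos_nonneg_of_mem_Icc ⟨by linarith, hb₁⟩
  have hq₂nn : 0 ≤ q₂ := hq₂ ▸ Real.cos_nonneg_of_mem_Icc ⟨by linarith, hb₂⟩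
  have hq₃nn : 0 ≤ q₃ := hq₃ ▸ Real.cos_nonneg_of_mem_Icc ⟨by linarith, hb₃⟩
  have hpq₁ : p₁ ^ 2 + q₁ ^ 2 = 1 := by
    rw [hp₁, hq₁]; exact Real.sin_sq_add_cos_sq _
  have hpq₂ : p₂ ^ 2 + q₂ ^ 2 = 1 := by
    rw [hp₂, hq₂]; exact Real.sin_sq_add_cos_sq _
  -- l² identity
  have hE : 0 ≤ q₁ ^ 2 + q₂ ^ 2 + q₃ ^ 2 + 2 * q₁ * q₂ * q₃ - 1 := by
    by_contra hneg
    push_neg at hneg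
    rw [hl, Real.sqrt_eq_zero_of_nonpos (le_of_lt hneg)] at hlpos
    exact lt_irrefl 0 hlpos
  have hl2 : l ^ 2 = q₁ ^ 2 + q₂ ^ 2 + q₃ ^ 2 + 2 * q₁ * q₂ * q₃ - 1 := by
    rw [hl, Real.sq_sqrt hE]
  -- q₁ > 0 or q₂ > 0
  have hq12 : 0 < q₁ ∨ 0 < q₂ := by
    rcases lt_or_ge ν₁ 3 with hν | hν
    · right
      -- ν₁ = 2 so ν₂ ≥ 3
      have hν1 : ν₁ = 2 := by omega
      have hν2 : 3 ≤ ν₂ := by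
        by_contra hc
        have hν2' : ν₂ = 2 := by omega
        rw [hν1, hν2'] at hhyp
        have : (0:ℝ) < 1 / ν₃ := by positivity
        norm_num at hhyp
        linarith
      have : π / ν₂ < π / 2 := by
        apply div_lt_div_of_pos_left hπ (by norm_num)
        have : (3:ℝ) ≤ ν₂ := by exact_mod_cast hν2
        linarith
      rw [hq₂]
      exact Real.cos_pos_of_mem_Ioo ⟨by linarith, this⟩
    · left
      have : π / ν₁ < π / 2 := by
        apply div_lt_div_of_pos_left hπ (by norm_num)
        have : (3:ℝ) ≤ ν₁ := by exact_mod_cast hν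
        linarith
      rw [hq₁]
      exact Real.cos_pos_of_mem_Ioo ⟨by linarith, this⟩
  have hNpos : 0 < q₂ + q₁ * q₃ + q₁ * l := by
    rcases hq12 with h' | h' <;> nlinarith
  have hkpos : 0 < k := by
    rw [hk]
    exact div_pos hNpos (by positivity)
  have hkne : k ≠ 0 := ne_of_gt hkpos
  have hhne : h ≠ 0 := by
    rw [hh]
    exact div_ne_zero (by positivity) hden₂
  have hp₁ne : p₁ ≠ 0 := ne_of_gt hp₁pos
  have hp₂ne : p₂ ≠ 0 := ne_of_gt hp₂pos
  refine ⟨?_, ?_, ?_⟩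
  · rw [Matrix.det_fin_two_of]
    linear_combination (p₁^2) * mul_inv_cancel₀ hkne + hpq₁
  · rw [Matrix.det_fin_two_of]
    linear_combination (p₂^2) * mul_inv_cancel₀ hhne + hpq₂
  · have t1 : k * h⁻¹ * (p₁ * p₂) = q₁ * q₂ + q₃ + l := by
      rw [hh, inv_div]
      field_simp
    have t2 : k⁻¹ * h * (p₁ * p₂) = (p₁ * p₂) ^ 2 / (q₁ * q₂ + q₃ + l) := by
      rw [hh]
      field_simp
    have key : (q₁ * q₂ + q₃ + l) * (q₁ * q₂ + q₃ - l) = (p₁ * p₂) ^ 2 := by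
      linear_combination (-1) * hl2 + (-(p₂^2)) * hpq₁ + (q₁^2 - 1) * hpq₂
    have tr : ((!![-q₁, -k * p₁; k⁻¹ * p₁, -q₁] : Matrix (Fin 2) (Fin 2) ℝ) *
        !![-q₂, -h * p₂; h⁻¹ * p₂, -q₂]).trace
        = 2 * (q₁ * q₂) - k * h⁻¹ * (p₁ * p₂) - k⁻¹ * h * (p₁ * p₂) := by
      rw [Matrix.mul_fin_two, Matrix.trace_fin_two_of]
      ring
    have t3 : (p₁ * p₂) ^ 2 / (q₁ * q₂ + q₃ + l) = q₁ * q₂ + q₃ - l := by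
      rw [div_eq_iff hden₂]
      linear_combination (-1 : ℝ) * key
    rw [tr, t1, t2, t3]
    ring
end
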